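/- A measurement-dependent local deterministic model with uniform setting accessibility bound ℓ > 1/4 on two binary settings per side cannot reach the PR-box: for any finite Λ with pmf p(λ), conditional setting distributions p(x,y|λ) ≥ ℓ for all four setting pairs (x,y) ∈ {0,1}², and deterministic responses A(x,λ), B(y,λ) ∈ {−1,1}, the resulting behavior p(a,b|x,y) cannot satisfy all four PR-box constraints a·b = (−1)^{x·y} with probability 1. -/

import Mathlib

/-- A measurement-dependent local deterministic model with uniform setting
accessibility bound ℓ > 1/4 cannot reproduce the PR-box: it is impossible that for
every setting pair (x,y) the constraint A(x,λ)·B(y,λ) = (-1)^{x·y} holds with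
conditional probability 1. -/
theorem stmt_19 {Λ : Type*} [Fintype Λ]
    (p : Λ → ℝ) (hpnn : ∀ l, 0 ≤ p l) (hpsum : ∑ l, p l = 1)
    (q : Λ → Fin 2 × Fin 2 → ℝ) (hqnn : ∀ l s, 0 ≤ q l s)
    (hqsum : ∀ l, ∑ s, q l s = 1)
    (ℓ : ℝ) (hℓ : 1 / 4 < ℓ)
    (hacc : ∀ l, 0 < p l → ∀ s, ℓ ≤ q l s)
    (A B : Fin 2 → Λ → ℝ)
    (hA : ∀ x l, A x l = 1 ∨ A x l = -1) (hB : ∀ y l, B y l = 1 ∨ B y l = -1) :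
    ¬ ∀ x y : Fin 2,
      (∑ l, p l * q l (x, y) *
        (if A x l * B y l = (-1 : ℝ) ^ ((x : ℕ) * (y : ℕ)) then 1 else 0)) =
      ∑ l, p l * q l (x, y) := by
  intro h
  obtain ⟨l0, hl0⟩ : ∃ l, 0 < p l := by
    by_contra hc
    push_neg at hc
    have : (∑ l, p l) ≤ 0 := Finset.sum_nonpos (fun l _ => hc l)
    linarith
  have key : ∀ x y : Fin 2, A x l0 * B y l0 = (-1 : ℝ) ^ ((x : ℕ) * (y : ℕ)) := by
    intro x y
    have hq0 : 0 < q l0 (x, y) :=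
      lt_of_lt_of_le (by linarith) (hacc l0 hl0 (x, y))
    have hle : ∀ l ∈ Finset.univ (α := Λ),
        p l * q l (x, y) *
          (if A x l * B y l = (-1 : ℝ) ^ ((x : ℕ) * (y : ℕ)) then 1 else 0) ≤
        p l * q l (x, y) := by
      intro l _
      have hpq : 0 ≤ p l * q l (x, y) := mul_nonneg (hpnn l) (hqnn l _)
      split <;> nlinarith
    have := (Finset.sum_eq_sum_iff_of_le hle).mp (h x y) l0 (Finset.mem_univ _)
    by_contra hne
    rw [if_neg hne] at this
    nlinarith
  have e00 := key 0 0
  have e01 := key 0 1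
  have e10 := key 1 0
  have e11 := key 1 1
  norm_num at e00 e01 e10 e11
  rcases hA 0 l0 with h1 | h1 <;> rcases hA 1 l0 with h2 | h2 <;>
    rcases hB 0 l0 with h3 | h3 <;> rcases hB 1 l0 with h4 | h4 <;>
    simp only [h1, h2, h3, h4] at e00 e01 e10 e11 <;> linarith
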